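/- Let T be an Ax-maximal consistent set of PTEL formulas and α a formula. If r = sup{s ∈ ℚ ∩ [0,1] : P_{≥s} α ∈ T} and r is rational, then P_{≥r} α ∈ T; moreover, for every rational s ∈ [0,1] with s < r one has P_{≥s} α ∈ T. -/
import Mathlib


namespace PTEL

/-- Formulas of the probabilistic temporal epistemic logic PTEL with `m` agents
(agents are `Fin m`).  Propositional letters are `atom n` (`n : ℕ`) together with
the special letters `act a` (the letter `A_a`, "agent `a` is active"). -/
inductive Frm (m : ℕ) : Type where
  | atom   : ℕ → Frm m
  | act    : Fin m → Frm m
  | neg    : Frm m → Frm m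
  | and    : Frm m → Frm m → Frm m
  | next   : Frm m → Frm m
  | until  : Frm m → Frm m → Frm m
  | prev   : Frm m → Frm m
  | since  : Frm m → Frm m → Frm m
  | know   : Fin m → Frm m → Frm m
  | common : Frm m → Frm m
  | pge    : ℚ → Frm m → Frm m            -- P_{≥ s} α
  | page   : Fin m → ℚ → Frm m → Frm m    -- P_{a, ≥ s} α

namespace Frm

variable {m : ℕ}

/-- `α → β` defined classically as `¬(α ∧ ¬β)`. -/
def imp (α β : Frm m) : Frm m := Frm.neg (Frm.and α (Frm.neg β))

/-- `α ∨ β` defined classically. -/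
def orf (α β : Frm m) : Frm m := Frm.neg (Frm.and (Frm.neg α) (Frm.neg β))

/-- `α ↔ β`. -/
def ifff (α β : Frm m) : Frm m := Frm.and (imp α β) (imp β α)

/-- A fixed tautology `⊤`. -/
def verum : Frm m := imp (Frm.atom 0) (Frm.atom 0)

/-- `◯^n α`. -/
def nextPow : ℕ → Frm m → Frm m
  | 0, α => α
  | n + 1, α => Frm.next (nextPow n α)

/-- `●^n α`. -/
def prevPow : ℕ → Frm m → Frm m
  | 0, α => α
  | n + 1, α => Frm.prev (prevPow n α)

/-- `⋀_{l=0}^{n-1} f l` (the empty conjunction is `⊤`). -/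
def conjBelow (f : ℕ → Frm m) : ℕ → Frm m
  | 0 => verum
  | n + 1 => Frm.and (conjBelow f n) (f n)

/-- `G α = ⋀_{a ∈ Agents} K_a α` (everybody knows). -/
def ek (α : Frm m) : Frm m :=
  (List.finRange m).foldr (fun a acc => Frm.and (Frm.know a α) acc) verum

/-- `G^n α` where `G^0 α = α` and `G^{n+1} α = G (G^n α)`. -/
def ekPow : ℕ → Frm m → Frm m
  | 0, α => α
  | n + 1, α => ek (ekPow n α)

/-- `◇ α = (α → α) U α`. -/
def sometime (α : Frm m) : Frm m := Frm.until (imp α α) α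

/-- `□ α = ¬ ◇ ¬ α`. -/
def always (α : Frm m) : Frm m := Frm.neg (sometime (Frm.neg α))

/-- `P_{< s} α  =  ¬ P_{≥ s} α`. -/
def plt (s : ℚ) (α : Frm m) : Frm m := Frm.neg (Frm.pge s α)

/-- `P_{≤ s} α  =  P_{≥ 1-s} ¬α`. -/
def ple (s : ℚ) (α : Frm m) : Frm m := Frm.pge (1 - s) (Frm.neg α)

/-- `P_{a, < s} α  =  ¬ P_{a, ≥ s} α`. -/
def palt (a : Fin m) (s : ℚ) (α : Frm m) : Frm m := Frm.neg (Frm.page a s α)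

/-- `P_{a, ≤ s} α  =  P_{a, ≥ 1-s} ¬α`. -/
def pale (a : Fin m) (s : ℚ) (α : Frm m) : Frm m := Frm.page a (1 - s) (Frm.neg α)

end Frm

/-- The unary operators `K_a`, `◯`, `●` used in `k`-nested implications. -/
inductive Op (m : ℕ) : Type where
  | know : Fin m → Op m
  | next : Op m
  | prev : Op m

def Op.app {m : ℕ} : Op m → Frm m → Frm m
  | .know a, α => Frm.know a α
  | .next, α => Frm.next α
  | .prev, α => Frm.prev α

/-- The `k`-nested implication `Φ_{k,B,X}(τ)`.  Here `β0` is the innermost formula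
`β_0`, and `L = [(β_k, X_k), (β_{k-1}, X_{k-1}), …, (β_1, X_1)]` lists the remaining
formulas of `B` paired with the operators of `X`, from the outermost inwards:
`Φ_{0,(β_0),()}(τ) = β_0 → τ` and
`Φ_{k,B,X}(τ) = β_k → X_k Φ_{k-1,(β_0,…,β_{k-1}),(X_1,…,X_{k-1})}(τ)` for `k ≥ 1`. -/
def KNI {m : ℕ} (β0 : Frm m) : List (Frm m × Op m) → Frm m → Frm m
  | [], τ => Frm.imp β0 τ
  | p :: L, τ => Frm.imp p.1 (Op.app p.2 (KNI β0 L τ))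

/-- Instances of classical propositional tautologies: formulas true under every
Boolean valuation that respects `¬` and `∧`. -/
def IsTautology {m : ℕ} (φ : Frm m) : Prop :=
  ∀ v : Frm m → Bool,
    (∀ α, v (Frm.neg α) = !(v α)) →
    (∀ α β, v (Frm.and α β) = (v α && v β)) →
    v φ = true

/-- `q ∈ [0,1] ∩ ℚ`. -/
def InUnit (q : ℚ) : Prop := 0 ≤ q ∧ q ≤ 1

/-- Derivability in the axiomatic system `Ax` of PTEL.  Premises of the
necessitation rules must be theorems (derivable from `∅`); the rules
`ruleUntil`, `ruleSince`, `ruleCommon`, `ruleArch`, `ruleArchA` are the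
infinitary rules RU, RS, RC, RGA, RA formulated via `k`-nested implications. -/
inductive Deriv {m : ℕ} : Set (Frm m) → Frm m → Prop where
  -- I. propositional part
  | hyp {T : Set (Frm m)} {φ} (h : φ ∈ T) : Deriv T φ
  | tauto {T : Set (Frm m)} {φ} (h : IsTautology φ) : Deriv T φ
  | mp {T : Set (Frm m)} {φ ψ} (h1 : Deriv T (Frm.imp φ ψ)) (h2 : Deriv T φ) : Deriv T ψ
  -- II. temporal axioms and rules
  | axNextNeg {T : Set (Frm m)} (α) :
      Deriv T (Frm.ifff (Frm.neg (Frm.next α)) (Frm.next (Frm.neg α)))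
  | axNextImp {T : Set (Frm m)} (α β) :
      Deriv T (Frm.imp (Frm.next (Frm.imp α β)) (Frm.imp (Frm.next α) (Frm.next β)))
  | axUntilNext {T : Set (Frm m)} (α β) :
      Deriv T (Frm.ifff (Frm.until α β)
        (Frm.orf β (Frm.and α (Frm.next (Frm.until α β)))))
  | axUntilSometime {T : Set (Frm m)} (α β) :
      Deriv T (Frm.imp (Frm.until α β) (Frm.sometime β))
  | axPrevNeg {T : Set (Frm m)} (α) :
      Deriv T (Frm.imp (Frm.neg (Frm.prev (Frm.neg α))) (Frm.prev α))
  | axPrevImp {T : Set (Frm m)} (α β) :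
      Deriv T (Frm.imp (Frm.prev (Frm.imp α β)) (Frm.imp (Frm.prev α) (Frm.prev β)))
  | axPrevAnd {T : Set (Frm m)} (α β) :
      Deriv T (Frm.imp (Frm.and (Frm.prev α) (Frm.prev β)) (Frm.prev (Frm.and α β)))
  | axNextPrev {T : Set (Frm m)} (α) :
      Deriv T (Frm.ifff (Frm.next (Frm.prev α)) α)
  | axNextPrevC1 {T : Set (Frm m)} (α) :
      Deriv T (Frm.imp (Frm.next (Frm.prev α)) (Frm.prev (Frm.next α)))
  | axNextPrevC2 {T : Set (Frm m)} (α γ) :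
      Deriv T (Frm.imp (Frm.neg (Frm.prev (Frm.and γ (Frm.neg γ))))
        (Frm.ifff (Frm.next (Frm.prev α)) (Frm.prev (Frm.next α))))
  | axSincePrev {T : Set (Frm m)} (α β) :
      Deriv T (Frm.ifff (Frm.since α β)
        (Frm.orf β (Frm.and (Frm.neg (Frm.prev (Frm.and α (Frm.neg α))))
          (Frm.and α (Frm.prev (Frm.since α β))))))
  | axOncePrev {T : Set (Frm m)} (β) :
      Deriv T (Frm.since (Frm.imp (Frm.prev β) (Frm.prev β)) (Frm.prev β))
  | ruleNextNec {T : Set (Frm m)} {α} (h : Deriv ∅ α) : Deriv T (Frm.next α)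
  | rulePrevNec {T : Set (Frm m)} {α} (h : Deriv ∅ α) : Deriv T (Frm.prev α)
  | ruleUntil {T : Set (Frm m)} {β0 : Frm m} {L : List (Frm m × Op m)} {α β : Frm m}
      (h : ∀ i : ℕ, Deriv T (KNI β0 L (Frm.neg
        (Frm.and (Frm.conjBelow (fun l => Frm.nextPow l α) i) (Frm.nextPow i β))))) :
      Deriv T (KNI β0 L (Frm.neg (Frm.until α β)))
  | ruleSince {T : Set (Frm m)} {β0 : Frm m} {L : List (Frm m × Op m)} {α β : Frm m}
      (h : ∀ i : ℕ, Deriv T (KNI β0 L (Frm.neg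
        (Frm.and (Frm.conjBelow (fun l => Frm.prevPow l α) i)
          (Frm.and (Frm.conjBelow (fun l => Frm.neg (Frm.prevPow l (Frm.and α (Frm.neg α)))) (i + 1))
            (Frm.prevPow i β)))))) :
      Deriv T (KNI β0 L (Frm.neg (Frm.since α β)))
  -- III. epistemic axioms and rules
  | axKImp {T : Set (Frm m)} (a : Fin m) (α β) :
      Deriv T (Frm.imp (Frm.know a (Frm.imp α β)) (Frm.imp (Frm.know a α) (Frm.know a β)))
  | axKRefl {T : Set (Frm m)} (a : Fin m) (α) :
      Deriv T (Frm.imp (Frm.act a) (Frm.imp (Frm.know a α) α))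
  | axKAware {T : Set (Frm m)} (a : Fin m) :
      Deriv T (Frm.imp (Frm.act a) (Frm.know a (Frm.act a)))
  | axKDead {T : Set (Frm m)} (a : Fin m) (α) :
      Deriv T (Frm.imp (Frm.neg (Frm.act a)) (Frm.know a (Frm.and α (Frm.neg α))))
  | axKSymm {T : Set (Frm m)} (a : Fin m) (α) :
      Deriv T (Frm.imp (Frm.know a (Frm.neg α)) (Frm.know a (Frm.neg (Frm.know a α))))
  | axKTrans {T : Set (Frm m)} (a : Fin m) (α) :
      Deriv T (Frm.imp (Frm.know a α) (Frm.know a (Frm.know a α)))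
  | axCommon {T : Set (Frm m)} (α) (n : ℕ) :
      Deriv T (Frm.imp (Frm.common α) (Frm.ekPow n α))
  | ruleKNec {T : Set (Frm m)} (a : Fin m) {α} (h : Deriv ∅ α) : Deriv T (Frm.know a α)
  | ruleCommon {T : Set (Frm m)} {β0 : Frm m} {L : List (Frm m × Op m)} {α : Frm m}
      (h : ∀ i : ℕ, Deriv T (KNI β0 L (Frm.ekPow i α))) :
      Deriv T (KNI β0 L (Frm.common α))
  -- IV. probabilities on runs
  | axPge0 {T : Set (Frm m)} (α) : Deriv T (Frm.pge 0 α)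
  | axPleLt {T : Set (Frm m)} (α) {r t : ℚ} (hr : InUnit r) (ht : InUnit t) (h : r < t) :
      Deriv T (Frm.imp (Frm.ple r α) (Frm.plt t α))
  | axPltLe {T : Set (Frm m)} (α) {t : ℚ} (ht : InUnit t) :
      Deriv T (Frm.imp (Frm.plt t α) (Frm.ple t α))
  | axPAdd {T : Set (Frm m)} (α β) {r t : ℚ} (hr : InUnit r) (ht : InUnit t) :
      Deriv T (Frm.imp
        (Frm.and (Frm.pge r α) (Frm.and (Frm.pge t β) (Frm.pge 1 (Frm.neg (Frm.and α β)))))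
        (Frm.pge (min 1 (r + t)) (Frm.orf α β)))
  | axPAdd2 {T : Set (Frm m)} (α β) {r t : ℚ} (hr : InUnit r) (ht : InUnit t)
      (h : r + t ≤ 1) :
      Deriv T (Frm.imp (Frm.and (Frm.ple r α) (Frm.plt t α)) (Frm.plt (r + t) (Frm.orf α β)))
  | axPPrev {T : Set (Frm m)} (α) :
      Deriv T (Frm.pge 1 (Frm.prev (Frm.and α (Frm.neg α))))
  | rulePNec {T : Set (Frm m)} {α} (h : Deriv ∅ α) : Deriv T (Frm.pge 1 α)
  | ruleArch {T : Set (Frm m)} {β0 : Frm m} {L : List (Frm m × Op m)} {α : Frm m} {r : ℚ}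
      (hr0 : 0 < r) (hr1 : r ≤ 1)
      (h : ∀ i : ℕ, 1 / r ≤ (i : ℚ) → Deriv T (KNI β0 L (Frm.pge (r - 1 / (i : ℚ)) α))) :
      Deriv T (KNI β0 L (Frm.pge r α))
  -- V. probabilities on possible worlds
  | axPAge0 {T : Set (Frm m)} (a : Fin m) (α) : Deriv T (Frm.page a 0 α)
  | axPALeLt {T : Set (Frm m)} (a : Fin m) (α) {r t : ℚ} (hr : InUnit r) (ht : InUnit t)
      (h : r < t) :
      Deriv T (Frm.imp (Frm.pale a r α) (Frm.palt a t α))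
  | axPALtLe {T : Set (Frm m)} (a : Fin m) (α) {t : ℚ} (ht : InUnit t) :
      Deriv T (Frm.imp (Frm.palt a t α) (Frm.pale a t α))
  | axPAAdd {T : Set (Frm m)} (a : Fin m) (α β) {r t : ℚ} (hr : InUnit r) (ht : InUnit t) :
      Deriv T (Frm.imp
        (Frm.and (Frm.page a r α)
          (Frm.and (Frm.page a t β) (Frm.page a 1 (Frm.neg (Frm.and α β)))))
        (Frm.page a (min 1 (r + t)) (Frm.orf α β)))
  | axPAAdd2 {T : Set (Frm m)} (a : Fin m) (α β) {r t : ℚ} (hr : InUnit r) (ht : InUnit t)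
      (h : r + t ≤ 1) :
      Deriv T (Frm.imp (Frm.and (Frm.pale a r α) (Frm.palt a t α))
        (Frm.palt a (r + t) (Frm.orf α β)))
  | rulePANec {T : Set (Frm m)} (a : Fin m) {α} (h : Deriv ∅ α) : Deriv T (Frm.page a 1 α)
  | ruleArchA {T : Set (Frm m)} (a : Fin m) {β0 : Frm m} {L : List (Frm m × Op m)}
      {α : Frm m} {r : ℚ} (hr0 : 0 < r) (hr1 : r ≤ 1)
      (h : ∀ i : ℕ, 1 / r ≤ (i : ℚ) →
        Deriv T (KNI β0 L (Frm.page a (r - 1 / (i : ℚ)) α))) :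
      Deriv T (KNI β0 L (Frm.page a r α))

/-- A theory is inconsistent if it derives every formula. -/
def Inconsistent {m : ℕ} (T : Set (Frm m)) : Prop := ∀ φ : Frm m, Deriv T φ

def Consistent {m : ℕ} (T : Set (Frm m)) : Prop := ¬ Inconsistent T

def MaximalConsistent {m : ℕ} (T : Set (Frm m)) : Prop :=
  Consistent T ∧ ∀ S : Set (Frm m), T ⊂ S → ¬ Consistent S

/-! ### Semantics -/

/-- A run assigns to each moment the set of propositional letters true at it
(`Sum.inl n` is the letter `atom n`, `Sum.inr a` is the letter `A_a`). -/
abbrev Run (m : ℕ) : Type := ℕ → Set (ℕ ⊕ Fin m)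

/-- A finitely additive probability measure defined on an algebra of subsets of `X`. -/
structure FinAddProb (X : Type) where
  sets : Set (Set X)
  univ_mem : Set.univ ∈ sets
  compl_mem : ∀ A ∈ sets, Aᶜ ∈ sets
  union_mem : ∀ A ∈ sets, ∀ B ∈ sets, A ∪ B ∈ sets
  mu : Set X → ℝ
  mu_nonneg : ∀ A ∈ sets, 0 ≤ mu A
  mu_univ : mu Set.univ = 1
  mu_add : ∀ A ∈ sets, ∀ B ∈ sets, Disjoint A B → mu (A ∪ B) = mu A + mu B

/-- A finitely additive probability space on a nonempty subset (`carrier`) of `X`,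
with an algebra of subsets of the carrier. -/
structure SubFinAddProb (X : Type) where
  carrier : Set X
  carrier_nonempty : carrier.Nonempty
  sets : Set (Set X)
  sets_sub : ∀ A ∈ sets, A ⊆ carrier
  carrier_mem : carrier ∈ sets
  compl_mem : ∀ A ∈ sets, carrier \ A ∈ sets
  union_mem : ∀ A ∈ sets, ∀ B ∈ sets, A ∪ B ∈ sets
  mu : Set X → ℝ
  mu_nonneg : ∀ A ∈ sets, 0 ≤ mu A
  mu_carrier : mu carrier = 1
  mu_add : ∀ A ∈ sets, ∀ B ∈ sets, Disjoint A B → mu (A ∪ B) = mu A + mu B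

/-- A PTEL Kripke model. -/
structure Model (m : ℕ) where
  runs : Set (Run m)
  runs_nonempty : runs.Nonempty
  /-- epistemic accessibility relations on possible worlds (pairs run/time) -/
  acc : Fin m → (↥runs × ℕ) → (↥runs × ℕ) → Prop
  acc_symm : ∀ a w w', acc a w w' → acc a w' w
  acc_trans : ∀ a w w' w'', acc a w w' → acc a w' w'' → acc a w w''
  /-- agent `a` is inactive at `w` iff no world is accessible from `w` -/
  inactive_iff : ∀ (a : Fin m) (w : ↥runs × ℕ),
    Sum.inr a ∉ w.1.1 w.2 ↔ ∀ w', ¬ acc a w w'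
  /-- accessibility is reflexive at worlds where the agent is active -/
  acc_refl : ∀ (a : Fin m) (w : ↥runs × ℕ), Sum.inr a ∈ w.1.1 w.2 → acc a w w
  /-- the probability on runs associated to each possible world -/
  runProb : (↥runs × ℕ) → FinAddProb ↥runs
  /-- the agents' probability spaces on possible worlds -/
  agentProb : Fin m → (↥runs × ℕ) → SubFinAddProb (↥runs × ℕ)

abbrev Model.World {m : ℕ} (M : Model m) : Type := ↥M.runs × ℕ

/-- Satisfaction of a formula at a possible world of a model.  Common knowledge is
interpreted via reachability (the equivalent formulation of `(r,n) ⊨ C β`). -/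
def Sat {m : ℕ} (M : Model m) : Frm m → M.World → Prop
  | .atom n, w => Sum.inl n ∈ w.1.1 w.2
  | .act a, w => Sum.inr a ∈ w.1.1 w.2
  | .neg α, w => ¬ Sat M α w
  | .and α β, w => Sat M α w ∧ Sat M β w
  | .next α, w => Sat M α (w.1, w.2 + 1)
  | .until α β, w => ∃ j, w.2 ≤ j ∧ Sat M β (w.1, j) ∧
      ∀ k, w.2 ≤ k → k < j → Sat M α (w.1, k)
  | .prev α, w => w.2 = 0 ∨ ∃ n, w.2 = n + 1 ∧ Sat M α (w.1, n)
  | .since α β, w => ∃ j, j ≤ w.2 ∧ Sat M β (w.1, j) ∧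
      ∀ k, j < k → k ≤ w.2 → Sat M α (w.1, k)
  | .know a α, w => ∀ w', M.acc a w w' → Sat M α w'
  | .common α, w => ∀ w', Relation.ReflTransGen (fun u v => ∃ a, M.acc a u v) w w' →
      Sat M α w'
  | .pge s α, w => (s : ℝ) ≤ (M.runProb w).mu {r : ↥M.runs | Sat M α (r, 0)}
  | .page a s α, w => (s : ℝ) ≤ (M.agentProb a w).mu
      {w' : M.World | w' ∈ (M.agentProb a w).carrier ∧ Sat M α w'}

/-- A model is measurable if all definable sets of runs / of possible worlds are
measurable. -/
def Model.Measurable {m : ℕ} (M : Model m) : Prop :=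
  ∀ (β : Frm m) (w : M.World),
    {r : ↥M.runs | Sat M β (r, 0)} ∈ (M.runProb w).sets ∧
    ∀ a : Fin m,
      {w' : M.World | w' ∈ (M.agentProb a w).carrier ∧ Sat M β w'} ∈ (M.agentProb a w).sets

/-- A set of formulas is satisfiable if it holds at a possible world of some
measurable model. -/
def SatisfiableSet {m : ℕ} (T : Set (Frm m)) : Prop :=
  ∃ M : Model m, M.Measurable ∧ ∃ w : M.World, ∀ φ ∈ T, Sat M φ w

end PTEL

namespace PTEL

section Aux

variable {m : ℕ}

/-- Cut / monotonicity: if every hypothesis of `S` is derivable from `T`, then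
anything derivable from `S` is derivable from `T`. -/
theorem derivCut {T : Set (Frm m)} :
    ∀ {S : Set (Frm m)} {ψ : Frm m}, Deriv S ψ → (∀ χ ∈ S, Deriv T χ) → Deriv T ψ := by
  intro S ψ h
  induction h with
  | hyp h => exact fun hST => hST _ h
  | tauto h => exact fun _ => Deriv.tauto h
  | mp _ _ ih1 ih2 => exact fun hST => Deriv.mp (ih1 hST) (ih2 hST)
  | axNextNeg α => exact fun _ => Deriv.axNextNeg α
  | axNextImp α β => exact fun _ => Deriv.axNextImp α β
  | axUntilNext α β => exact fun _ => Deriv.axUntilNext α β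
  | axUntilSometime α β => exact fun _ => Deriv.axUntilSometime α β
  | axPrevNeg α => exact fun _ => Deriv.axPrevNeg α
  | axPrevImp α β => exact fun _ => Deriv.axPrevImp α β
  | axPrevAnd α β => exact fun _ => Deriv.axPrevAnd α β
  | axNextPrev α => exact fun _ => Deriv.axNextPrev α
  | axNextPrevC1 α => exact fun _ => Deriv.axNextPrevC1 α
  | axNextPrevC2 α γ => exact fun _ => Deriv.axNextPrevC2 α γ
  | axSincePrev α β => exact fun _ => Deriv.axSincePrev α β
  | axOncePrev β => exact fun _ => Deriv.axOncePrev β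
  | ruleNextNec h _ => exact fun _ => Deriv.ruleNextNec h
  | rulePrevNec h _ => exact fun _ => Deriv.rulePrevNec h
  | ruleUntil _ ih => exact fun hST => Deriv.ruleUntil (fun i => ih i hST)
  | ruleSince _ ih => exact fun hST => Deriv.ruleSince (fun i => ih i hST)
  | axKImp a α β => exact fun _ => Deriv.axKImp a α β
  | axKRefl a α => exact fun _ => Deriv.axKRefl a α
  | axKAware a => exact fun _ => Deriv.axKAware a
  | axKDead a α => exact fun _ => Deriv.axKDead a α
  | axKSymm a α => exact fun _ => Deriv.axKSymm a α
  | axKTrans a α => exact fun _ => Deriv.axKTrans a α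
  | axCommon α n => exact fun _ => Deriv.axCommon α n
  | ruleKNec a h _ => exact fun _ => Deriv.ruleKNec a h
  | ruleCommon _ ih => exact fun hST => Deriv.ruleCommon (fun i => ih i hST)
  | axPge0 α => exact fun _ => Deriv.axPge0 α
  | axPleLt α hr ht h => exact fun _ => Deriv.axPleLt α hr ht h
  | axPltLe α ht => exact fun _ => Deriv.axPltLe α ht
  | axPAdd α β hr ht => exact fun _ => Deriv.axPAdd α β hr ht
  | axPAdd2 α β hr ht h => exact fun _ => Deriv.axPAdd2 α β hr ht h
  | axPPrev α => exact fun _ => Deriv.axPPrev α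
  | rulePNec h _ => exact fun _ => Deriv.rulePNec h
  | ruleArch hr0 hr1 _ ih => exact fun hST => Deriv.ruleArch hr0 hr1 (fun i hi => ih i hi hST)
  | axPAge0 a α => exact fun _ => Deriv.axPAge0 a α
  | axPALeLt a α hr ht h => exact fun _ => Deriv.axPALeLt a α hr ht h
  | axPALtLe a α ht => exact fun _ => Deriv.axPALtLe a α ht
  | axPAAdd a α β hr ht => exact fun _ => Deriv.axPAAdd a α β hr ht
  | axPAAdd2 a α β hr ht h => exact fun _ => Deriv.axPAAdd2 a α β hr ht h
  | rulePANec a h _ => exact fun _ => Deriv.rulePANec a h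
  | ruleArchA a hr0 hr1 _ ih =>
      exact fun hST => Deriv.ruleArchA a hr0 hr1 (fun i hi => ih i hi hST)

/-- A maximal consistent set is deductively closed. -/
theorem mcs_mem {T : Set (Frm m)} (hT : MaximalConsistent T) {φ : Frm m}
    (h : Deriv T φ) : φ ∈ T := by
  by_contra hφ
  have hsub : T ⊂ insert φ T := Set.ssubset_insert hφ
  have hinc : Inconsistent (insert φ T) := not_not.mp (hT.2 _ hsub)
  refine hT.1 (fun ψ => derivCut (hinc ψ) ?_)
  intro χ hχ
  rcases hχ with rfl | hχ
  · exact h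
  · exact Deriv.hyp hχ

lemma taut_chain (P Q R : Frm m) :
    IsTautology (Frm.imp (Frm.imp (Frm.neg P) Q)
      (Frm.imp (Frm.imp Q (Frm.neg R)) (Frm.imp R P))) := by
  intro v hneg hand
  simp only [Frm.imp, hneg, hand]
  cases v P <;> cases v Q <;> cases v R <;> rfl

lemma taut_K (P Q : Frm m) : IsTautology (Frm.imp P (Frm.imp Q P)) := by
  intro v hneg hand
  simp only [Frm.imp, hneg, hand]
  cases v P <;> cases v Q <;> rfl

lemma taut_verum : IsTautology (Frm.verum (m := m)) := by
  intro v hneg hand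
  simp only [Frm.verum, Frm.imp, hneg, hand]
  cases v (Frm.atom 0) <;> rfl

/-- Monotonicity of `P_{≥ ·}` in the index. -/
lemma pge_mono {T : Set (Frm m)} (α : Frm m) {s t : ℚ} (hs : InUnit s) (ht : InUnit t)
    (hst : s < t) (h : Deriv T (Frm.pge t α)) : Deriv T (Frm.pge s α) := by
  have h1 : Deriv T (Frm.imp (Frm.plt s α) (Frm.ple s α)) := Deriv.axPltLe α hs
  have h2 : Deriv T (Frm.imp (Frm.ple s α) (Frm.plt t α)) := Deriv.axPleLt α hs ht hst
  have h3 : Deriv T (Frm.imp (Frm.imp (Frm.neg (Frm.pge s α)) (Frm.ple s α))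
      (Frm.imp (Frm.imp (Frm.ple s α) (Frm.neg (Frm.pge t α)))
        (Frm.imp (Frm.pge t α) (Frm.pge s α)))) :=
    Deriv.tauto (taut_chain (Frm.pge s α) (Frm.ple s α) (Frm.pge t α))
  exact Deriv.mp (Deriv.mp (Deriv.mp h3 h1) h2) h

end Aux

/-- If `T` is maximal consistent and `r = sup {s ∈ ℚ ∩ [0,1] : P_{≥s} α ∈ T}`,
then: if `r` is rational then `P_{≥r} α ∈ T`, and for every rational
`s ∈ [0,1]` with `s < r`, `P_{≥s} α ∈ T`. -/
theorem sup_prob_in_mcs {m : ℕ} (T : Set (Frm m)) (hT : MaximalConsistent T)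
    (α : Frm m) (r : ℝ)
    (hr : r = sSup ((fun s : ℚ => (s : ℝ)) '' {s : ℚ | InUnit s ∧ Frm.pge s α ∈ T})) :
    (∀ q : ℚ, (q : ℝ) = r → Frm.pge q α ∈ T) ∧
    (∀ s : ℚ, InUnit s → (s : ℝ) < r → Frm.pge s α ∈ T) := by
  set S : Set ℝ := (fun s : ℚ => (s : ℝ)) '' {s : ℚ | InUnit s ∧ Frm.pge s α ∈ T} with hS
  have h0T : Frm.pge 0 α ∈ T := mcs_mem hT (Deriv.axPge0 α)
  have h0S : (0 : ℝ) ∈ S := ⟨0, ⟨⟨le_refl 0, by norm_num⟩, h0T⟩, by norm_num⟩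
  have hne : S.Nonempty := ⟨0, h0S⟩
  have hbdd : BddAbove S := by
    refine ⟨1, fun x hx => ?_⟩
    rcases hx with ⟨t, ⟨⟨_, ht1⟩, _⟩, rfl⟩
    show (t : ℝ) ≤ 1
    exact_mod_cast ht1
  have hr0 : (0 : ℝ) ≤ r := hr ▸ le_csSup hbdd h0S
  have hr1 : r ≤ 1 := by
    rw [hr]
    refine csSup_le hne fun x hx => ?_
    rcases hx with ⟨t, ⟨⟨_, ht1⟩, _⟩, rfl⟩
    show (t : ℝ) ≤ 1
    exact_mod_cast ht1
  have part2 : ∀ s : ℚ, InUnit s → (s : ℝ) < r → Frm.pge s α ∈ T := by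
    intro s hs hlt
    rw [hr] at hlt
    obtain ⟨x, hx, hsx⟩ := exists_lt_of_lt_csSup hne hlt
    rcases hx with ⟨t, ⟨ht, htT⟩, rfl⟩
    have hsx' : (s : ℝ) < (t : ℝ) := hsx
    have hst : s < t := by exact_mod_cast hsx'
    exact mcs_mem hT (pge_mono α hs ht hst (Deriv.hyp htT))
  refine ⟨?_, part2⟩
  intro q hq
  have hq0 : (0 : ℚ) ≤ q := by exact_mod_cast hq ▸ hr0
  have hq1 : q ≤ 1 := by exact_mod_cast hq ▸ hr1
  rcases eq_or_lt_of_le hq0 with heq | hqpos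
  · rw [← heq]; exact h0T
  · -- use the Archimedean rule with empty context
    have harch : Deriv T (KNI Frm.verum [] (Frm.pge q α)) := by
      refine Deriv.ruleArch hqpos hq1 ?_
      intro i hi
      have hipos : (0 : ℚ) < (i : ℚ) := lt_of_lt_of_le (by positivity) hi
      have hinv : 1 / (i : ℚ) ≤ q := (one_div_le hipos hqpos).mpr hi
      have hu0 : (0 : ℚ) ≤ q - 1 / (i : ℚ) := by linarith
      have hu1 : q - 1 / (i : ℚ) ≤ 1 := by
        have : (0 : ℚ) < 1 / (i : ℚ) := by positivity
        linarith
      have hulr : ((q - 1 / (i : ℚ) : ℚ) : ℝ) < r := by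
        have : q - 1 / (i : ℚ) < q := by
          have : (0 : ℚ) < 1 / (i : ℚ) := by positivity
          linarith
        calc ((q - 1 / (i : ℚ) : ℚ) : ℝ) < (q : ℝ) := by exact_mod_cast this
        _ = r := hq
      have hmem : Frm.pge (q - 1 / (i : ℚ)) α ∈ T := part2 _ ⟨hu0, hu1⟩ hulr
      show Deriv T (Frm.imp Frm.verum (Frm.pge (q - 1 / (i : ℚ)) α))
      exact Deriv.mp
        (Deriv.tauto (taut_K (Frm.pge (q - 1 / (i : ℚ)) α) Frm.verum))
        (Deriv.hyp hmem)
    have himp : Deriv T (Frm.imp Frm.verum (Frm.pge q α)) := harch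
    exact mcs_mem hT (Deriv.mp himp (Deriv.tauto taut_verum))

end PTEL
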